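/- Let p be an odd prime, n ≥ 0, 1 ≤ j ≤ p−2, and let i be an integer with (p−1)·p^n ≤ i ≤ p^{n+1} − 1. Then the binomial coefficient C(i − 1, j·p^n) is not divisible by p. -/

import Mathlib

/-- For an odd prime `p`, `n ≥ 0`, `1 ≤ j ≤ p − 2` and
`(p−1) p^n ≤ i ≤ p^(n+1) − 1`, the binomial coefficient `C(i − 1, j p^n)` is
not divisible by `p`. -/
theorem stmt11 (p n j i : ℕ) (hp : p.Prime) (hodd : Odd p)
    (hj1 : 1 ≤ j) (hj2 : j ≤ p - 2)
    (hi1 : (p - 1) * p ^ n ≤ i) (hi2 : i ≤ p ^ (n + 1) - 1) :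
    ¬ p ∣ Nat.choose (i - 1) (j * p ^ n) := by
  haveI : Fact p.Prime := ⟨hp⟩
  have hp2 : 2 ≤ p := hp.two_le
  have hppow : 0 < p ^ n := pow_pos hp.pos n
  set m := i - 1 with hm
  set k := j * p ^ n with hk
  -- basic bounds
  have hmlt : m < p ^ (n + 1) := by
    have : i ≤ p ^ (n + 1) - 1 := hi2
    have hple : 1 ≤ p ^ (n + 1) := Nat.one_le_pow _ _ hp.pos
    omega
  have hi0 : 1 ≤ i := by
    have : 1 * p ^ n ≤ (p - 1) * p ^ n := Nat.mul_le_mul_right _ (by omega)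
    omega
  have hkm : k ≤ m := by
    have h1 : k ≤ (p - 2) * p ^ n := Nat.mul_le_mul_right _ hj2
    have h2 : (p - 2) * p ^ n + p ^ n ≤ (p - 1) * p ^ n := by
      rw [← Nat.succ_mul]
      exact Nat.mul_le_mul_right _ (by omega)
    omega
  -- log bound
  have hlog : Nat.log p m < n + 2 := by
    rcases Nat.eq_zero_or_pos m with h0 | h0
    · simp [h0]
    · have := Nat.log_lt_of_lt_pow (by omega : m ≠ 0)
        (lt_of_lt_of_le hmlt (Nat.pow_le_pow_right hp.pos (by omega) : p ^ (n+1) ≤ p ^ (n+2)))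
      omega
  intro hdvd
  have hpos : 0 < Nat.choose m k := Nat.choose_pos hkm
  have h1 : 1 ≤ padicValNat p (Nat.choose m k) :=
    one_le_padicValNat_of_dvd hpos.ne' hdvd
  rw [padicValNat_choose hkm hlog] at h1
  have hempty : ((Finset.Ico 1 (n + 2)).filter
      fun t => p ^ t ≤ k % p ^ t + (m - k) % p ^ t) = ∅ := by
    rw [Finset.filter_eq_empty_iff]
    intro t ht
    simp only [Finset.mem_Ico] at ht
    push_neg
    rcases le_or_gt t n with htn | htn
    · have hdvdk : p ^ t ∣ k := Dvd.dvd.mul_left (pow_dvd_pow p htn) j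
      have hk0 : k % p ^ t = 0 := Nat.eq_zero_of_dvd_of_lt hdvdk |> fun _ =>
        Nat.mod_eq_zero_of_dvd hdvdk
      rw [hk0, Nat.zero_add]
      exact Nat.mod_lt _ (pow_pos hp.pos t)
    · calc k % p ^ t + (m - k) % p ^ t ≤ k + (m - k) :=
            Nat.add_le_add (Nat.mod_le _ _) (Nat.mod_le _ _)
        _ = m := Nat.add_sub_cancel' hkm
        _ < p ^ (n + 1) := hmlt
        _ ≤ p ^ t := Nat.pow_le_pow_right hp.pos htn
  rw [hempty] at h1
  simp at h1
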